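/- The class of context-free spanners is closed under projection: if S is a context-free spanner associated with variable set X and X' ⊆ X, then the spanner π_{X'}S, defined by π_{X'}S(d) = { μ restricted to X' : μ ∈ S(d) }, is a context-free spanner. -/

import Mathlib

/-- A variable operation: `(x, true)` is `⊢x` (open), `(x, false)` is `⊣x` (close). -/
abbrev VarOp (X : Type) : Type := X × Bool

/-- A ref-word: a word over the extended alphabet `Σ ∪ Γ_X`. -/
abbrev RefWord (T X : Type) : Type := List (T ⊕ VarOp X)

/-- The morphism `clr` erasing variable operations and fixing letters of `Σ`. -/
def clr {T X : Type} (r : RefWord T X) : List T :=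
  r.filterMap (fun a => match a with | Sum.inl t => some t | Sum.inr _ => none)

/-- A ref-word is valid for `X`: each `⊢x` and `⊣x` occurs exactly once, `⊢x` before `⊣x`. -/
def ValidRef {T X : Type} (r : RefWord T X) : Prop :=
  ∀ x : X, ∃ u v w : RefWord T X,
    r = u ++ Sum.inr (x, true) :: (v ++ Sum.inr (x, false) :: w) ∧
    ∀ b : Bool, Sum.inr (x, b) ∉ u ∧ Sum.inr (x, b) ∉ v ∧ Sum.inr (x, b) ∉ w

/-- `μ` is the `(X,d)`-mapping `μ^r` induced by the ref-word `r`. -/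
def MappingOf {T X : Type} (r : RefWord T X) (μ : X → ℕ × ℕ) : Prop :=
  ∀ x : X, ∃ u v w : RefWord T X,
    r = u ++ Sum.inr (x, true) :: (v ++ Sum.inr (x, false) :: w) ∧
    μ x = ((clr u).length + 1, (clr u).length + 1 + (clr v).length)

/-- The spanner defined by an extraction grammar (a CFG over `Σ ∪ Γ_X`). -/
def spanner {T X : Type} (G : ContextFreeGrammar (T ⊕ VarOp X)) (d : List T) :
    Set (X → ℕ × ℕ) :=
  {μ | ∃ r : RefWord T X, r ∈ G.language ∧ ValidRef r ∧ clr r = d ∧ MappingOf r μ}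

/-- A spanner is context-free if it is definable by an extraction grammar. -/
def IsCFSpanner {T X : Type} (S : List T → Set (X → ℕ × ℕ)) : Prop :=
  ∃ G : ContextFreeGrammar.{0} (T ⊕ VarOp X), ∀ d : List T, S d = spanner G d

namespace Stmt5

variable {T X : Type}

/-! ### The erasing morphism -/

section Phi
variable (X' : Set X) [DecidablePred (· ∈ X')]

def phi1 (a : T ⊕ VarOp X) : List (T ⊕ VarOp ↥X') :=
  match a with
  | Sum.inl t => [Sum.inl t]
  | Sum.inr (x, b) => if h : x ∈ X' then [Sum.inr (⟨x, h⟩, b)] else []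

def phi : RefWord T X → RefWord T ↥X'
  | [] => []
  | a :: l => phi1 X' a ++ phi l

lemma phi_append (u v : RefWord T X) : phi X' (u ++ v) = phi X' u ++ phi X' v := by
  induction u with
  | nil => rfl
  | cons a l ih => simp [phi, ih]

lemma phi_marker {x : X} (h : x ∈ X') (b : Bool) :
    phi1 (T := T) X' (Sum.inr (x, b)) = [Sum.inr (⟨x, h⟩, b)] := by
  simp [phi1, h]

lemma clr_phi1 (a : T ⊕ VarOp X) :
    clr (phi1 X' a) = (clr [a] : List T) := by
  rcases a with t | ⟨x, b⟩
  · rfl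
  · by_cases h : x ∈ X' <;> simp [phi1, h, clr]

lemma clr_phi (r : RefWord T X) : clr (phi X' r) = clr r := by
  induction r with
  | nil => rfl
  | cons a l ih =>
    have : clr (phi X' (a :: l)) = clr (phi1 X' a) ++ clr (phi X' l) := by
      simp [phi, clr, List.filterMap_append]
    rw [this, ih, clr_phi1]
    rcases a with t | p <;> simp [clr]

lemma mem_phi {c : T ⊕ VarOp ↥X'} {u : RefWord T X} (hc : c ∈ phi X' u) :
    ∃ a ∈ u, c ∈ phi1 X' a := by
  induction u with
  | nil => cases hc
  | cons a l ih =>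
    rcases List.mem_append.mp hc with h | h
    · exact ⟨a, by simp, h⟩
    · obtain ⟨a', ha', hc'⟩ := ih h
      exact ⟨a', by simp [ha'], hc'⟩

lemma marker_mem_of_mem_phi {x : X} {hx : x ∈ X'} {b : Bool} {u : RefWord T X}
    (h : Sum.inr ((⟨x, hx⟩ : ↥X'), b) ∈ phi X' u) : Sum.inr (x, b) ∈ u := by
  obtain ⟨a, ha, hc⟩ := mem_phi X' h
  rcases a with t | ⟨z, c⟩
  · simp [phi1] at hc
  · by_cases hz : z ∈ X'
    · simp only [phi1, dif_pos hz, List.mem_singleton, Sum.inr.injEq, Prod.mk.injEq,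
        Subtype.mk.injEq] at hc
      obtain ⟨h1, h2⟩ := hc
      subst h2
      cases h1
      exact ha
    · simp [phi1, hz] at hc

lemma not_marker_mem_phi {x : X} {hx : x ∈ X'} {b : Bool} {u : RefWord T X}
    (h : Sum.inr (x, b) ∉ u) : Sum.inr ((⟨x, hx⟩ : ↥X'), b) ∉ phi X' u :=
  fun hc => h (marker_mem_of_mem_phi X' hc)

lemma phi_split {x : X} (hx : x ∈ X') (u v w : RefWord T X) :
    phi X' (u ++ Sum.inr (x, true) :: (v ++ Sum.inr (x, false) :: w)) =
      phi X' u ++ Sum.inr ((⟨x, hx⟩ : ↥X'), true) ::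
        (phi X' v ++ Sum.inr ((⟨x, hx⟩ : ↥X'), false) :: phi X' w) := by
  rw [phi_append]
  show _ ++ (phi1 X' (Sum.inr (x, true)) ++ phi X' (v ++ _ :: w)) = _
  rw [phi_marker X' hx, phi_append]
  show _ ++ ([_] ++ (_ ++ (phi1 X' (Sum.inr (x, false)) ++ phi X' w))) = _
  rw [phi_marker X' hx]
  simp

end Phi

/-! ### The validity automaton -/

abbrev Q (X : Type) := X → Fin 3

def upd : Fin 3 → Bool → Option (Fin 3)
  | c, true => if c = 0 then some 1 else none
  | c, false => if c = 1 then some 2 else none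

section Aut
variable [DecidableEq X]

def dstep (q : Q X) : T ⊕ VarOp X → Option (Q X)
  | Sum.inl _ => some q
  | Sum.inr (x, b) => (upd (q x) b).map (fun v => Function.update q x v)

def run (q : Q X) : RefWord T X → Option (Q X)
  | [] => some q
  | a :: l =>
    match dstep q a with
    | none => none
    | some q' => run q' l

def mk1 (x : X) : T ⊕ VarOp X → Option Bool
  | Sum.inl _ => none
  | Sum.inr (z, b) => if z = x then some b else none

def projSeq (x : X) (r : RefWord T X) : List Bool := r.filterMap (mk1 x)

lemma mk1_eq_some {x : X} {a : T ⊕ VarOp X} {b : Bool} :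
    mk1 x a = some b ↔ a = Sum.inr (x, b) := by
  rcases a with t | ⟨z, c⟩
  · simp [mk1]
  · by_cases hz : z = x <;> simp [mk1, hz] <;> aesop

def runC (c : Fin 3) : List Bool → Option (Fin 3)
  | [] => some c
  | b :: l =>
    match upd c b with
    | none => none
    | some c' => runC c' l

lemma run_eq_some_iff (w : RefWord T X) :
    ∀ q f : Q X, run q w = some f ↔ ∀ x, runC (q x) (projSeq x w) = some (f x) := by
  induction w with
  | nil =>
    intro q f
    constructor
    · rintro h x; cases h; rfl
    · intro h
      have : q = f := funext fun x => by simpa [runC, projSeq] using h x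
      simp [run, this]
  | cons a l ih =>
    intro q f
    rcases a with t | ⟨z, b⟩
    · have hp : ∀ x, projSeq x (Sum.inl t :: l) = projSeq x l := by
        intro x; simp [projSeq, mk1]; rfl
      simp only [run, dstep, hp]
      exact ih q f
    · have hpz : projSeq z (Sum.inr (z, b) :: l) = b :: projSeq z l := by
        simp [projSeq, mk1]
      have hpx : ∀ x, x ≠ z → projSeq x (Sum.inr (z, b) :: l) = projSeq x l := by
        intro x hxz; simp [projSeq, mk1, Ne.symm hxz]
      cases hu : upd (q z) b with
      | none =>
        simp only [run, dstep, hu, Option.map_none]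
        constructor
        · intro h; cases h
        · intro h
          have := h z
          rw [hpz] at this
          simp [runC, hu] at this
      | some v =>
        simp only [run, dstep, hu, Option.map_some]
        rw [ih]
        constructor
        · intro h x
          by_cases hxz : x = z
          · subst hxz
            rw [hpz]
            have := h x
            rw [Function.update_self] at this
            simp [runC, hu, this]
          · rw [hpx x hxz]
            have := h x
            rwa [Function.update_of_ne hxz] at this
        · intro h x
          by_cases hxz : x = z
          · subst hxz
            have := h x
            rw [hpz] at this
            simp only [runC, hu] at this
            rwa [Function.update_self]
          · have := h x
            rw [hpx x hxz] at this
            rwa [Function.update_of_ne hxz]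

lemma runC_zero_two {bs : List Bool} : runC 0 bs = some 2 ↔ bs = [true, false] := by
  constructor
  · intro h
    rcases bs with _ | ⟨b, bs⟩
    · exact absurd h (by decide)
    · rcases b with _ | _
      · simp [runC, upd] at h
      · simp only [runC, upd, if_pos rfl] at h
        rcases bs with _ | ⟨b2, bs2⟩
        · exact absurd h (by decide)
        · rcases b2 with _ | _
          · simp only [runC, upd] at h
            rcases bs2 with _ | ⟨b3, bs3⟩
            · rfl
            · rcases b3 with _ | _ <;> simp [runC, upd] at h
          · simp [runC, upd] at h
  · rintro rfl; rfl

lemma filterMap_eq_cons_split {α β : Type*} {f : α → Option β} {l : List α} {b : β} {bs : List β}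
    (h : l.filterMap f = b :: bs) :
    ∃ u a v, l = u ++ a :: v ∧ (∀ c ∈ u, f c = none) ∧ f a = some b ∧ v.filterMap f = bs := by
  induction l with
  | nil => simp at h
  | cons a l ih =>
    cases hfa : f a with
    | none =>
      rw [List.filterMap_cons_none hfa] at h
      obtain ⟨u, a', v, h1, h2, h3, h4⟩ := ih h
      exact ⟨a :: u, a', v, by simp [h1], by
        intro c hc
        rcases List.mem_cons.mp hc with rfl | hc
        · exact hfa
        · exact h2 c hc, h3, h4⟩
    | some b' =>
      rw [List.filterMap_cons_some hfa] at h
      obtain ⟨rfl, rfl⟩ := List.cons.injEq .. ▸ (by exact ⟨(List.cons.inj h).1, (List.cons.inj h).2⟩ : b' = b ∧ l.filterMap f = bs)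
      exact ⟨[], a, l, rfl, by simp, hfa, rfl⟩

lemma validRef_iff_projSeq {r : RefWord T X} :
    ValidRef r ↔ ∀ x, projSeq x r = [true, false] := by
  constructor
  · intro h x
    obtain ⟨u, v, w, rfl, hfree⟩ := h x
    have hu : projSeq x u = [] := List.filterMap_eq_nil_iff.mpr fun a ha => by
      cases hb : mk1 x a with
      | none => rfl
      | some b => exact absurd (mk1_eq_some.mp hb ▸ ha) ((hfree b).1)
    have hv : projSeq x v = [] := List.filterMap_eq_nil_iff.mpr fun a ha => by
      cases hb : mk1 x a with
      | none => rfl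
      | some b => exact absurd (mk1_eq_some.mp hb ▸ ha) ((hfree b).2.1)
    have hw : projSeq x w = [] := List.filterMap_eq_nil_iff.mpr fun a ha => by
      cases hb : mk1 x a with
      | none => rfl
      | some b => exact absurd (mk1_eq_some.mp hb ▸ ha) ((hfree b).2.2)
    show List.filterMap (mk1 x) _ = _
    rw [List.filterMap_append]
    show projSeq x u ++ List.filterMap (mk1 x) (_ :: (v ++ _ :: w)) = _
    rw [List.filterMap_cons_some (mk1_eq_some.mpr rfl), List.filterMap_append,
      List.filterMap_cons_some (mk1_eq_some.mpr rfl)]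
    show projSeq x u ++ true :: (projSeq x v ++ false :: projSeq x w) = _
    rw [hu, hv, hw]
    rfl
  · intro h x
    obtain ⟨u, a, v0, rfl, hu, ha, hv0⟩ := filterMap_eq_cons_split (h x)
    obtain ⟨v, a2, w, rfl, hv, ha2, hw⟩ := filterMap_eq_cons_split hv0
    have ha' : a = Sum.inr (x, true) := mk1_eq_some.mp ha
    have ha2' : a2 = Sum.inr (x, false) := mk1_eq_some.mp ha2
    subst ha'; subst ha2'
    refine ⟨u, v, w, rfl, fun b => ⟨?_, ?_, ?_⟩⟩
    · intro hb; cases (hu _ hb).symm.trans (mk1_eq_some.mpr rfl)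
    · intro hb; cases (hv _ hb).symm.trans (mk1_eq_some.mpr rfl)
    · intro hb
      have := List.filterMap_eq_nil_iff.mp hw _ hb
      cases this.symm.trans (mk1_eq_some.mpr rfl)

end Aut

end Stmt5

namespace Stmt5

section Gram

variable {T X : Type} (X' : Set X) [DecidablePred (· ∈ X')] [DecidableEq X] [Fintype X]
variable (G : ContextFreeGrammar.{0} (T ⊕ VarOp X))

/-- Nonterminals of the projected grammar. -/
abbrev NTp : Type := Option (G.NT × (Q X × Q X))

/-- `Lift q s f s'` : `s'` is a lift of the sentential form `s`, reading states from `q` to `f`. -/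
inductive Lift : Q X → List (Symbol (T ⊕ VarOp X) G.NT) → Q X →
    List (Symbol (T ⊕ VarOp ↥X') (NTp G)) → Prop
  | nil (q : Q X) : Lift q [] q []
  | term {q q' f : Q X} {s s'} (a : T ⊕ VarOp X) (h : dstep q a = some q')
      (hs : Lift q' s f s') :
      Lift q (Symbol.terminal a :: s) f ((phi1 X' a).map Symbol.terminal ++ s')
  | nt {q q' f : Q X} {s s'} (B : G.NT) (hs : Lift q' s f s') :
      Lift q (Symbol.nonterminal B :: s) f (Symbol.nonterminal (some (B, q, q')) :: s')

noncomputable def allQ : List (Q X) := (Finset.univ : Finset (Q X)).toList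

lemma mem_allQ (q : Q X) : q ∈ allQ := by simp [allQ]

noncomputable def outs : List (Symbol (T ⊕ VarOp X) G.NT) → Q X →
    List (List (Symbol (T ⊕ VarOp ↥X') (NTp G)) × Q X)
  | [] => fun q => [([], q)]
  | Symbol.terminal a :: s => fun q =>
    (dstep q a).elim []
      (fun q' => (outs s q').map fun p => ((phi1 X' a).map Symbol.terminal ++ p.1, p.2))
  | Symbol.nonterminal B :: s => fun q =>
    allQ.flatMap fun q' =>
      (outs s q').map fun p => (Symbol.nonterminal (some (B, q, q')) :: p.1, p.2)

lemma outs_spec :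
    ∀ (s : List (Symbol (T ⊕ VarOp X) G.NT)) (q : Q X) (p),
      p ∈ outs X' G s q ↔ Lift X' G q s p.2 p.1 := by
  intro s
  induction s with
  | nil =>
    rintro q ⟨o, f⟩
    constructor
    · intro hp
      simp only [outs, List.mem_singleton, Prod.mk.injEq] at hp
      obtain ⟨rfl, rfl⟩ := hp
      exact Lift.nil _
    · intro hp
      cases hp
      simp [outs]
  | cons a s ih =>
    rintro q ⟨o, f⟩
    rcases a with a | B
    · constructor
      · intro hp
        simp only [outs] at hp
        cases hq : dstep (T := T) q a with
        | none => rw [hq] at hp; cases hp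
        | some q' =>
          rw [hq] at hp
          simp only [Option.elim_some, List.mem_map] at hp
          obtain ⟨p', hp', hpe⟩ := hp
          obtain ⟨rfl, rfl⟩ := Prod.mk.injEq .. ▸ hpe
          exact Lift.term a hq ((ih q' p').mp hp')
      · intro hp
        cases hp with
        | @term _ q' _ _ s0' a hq hs =>
          simp only [outs, hq, Option.elim_some, List.mem_map]
          exact ⟨(s0', f), (ih q' (s0', f)).mpr hs, rfl⟩
    · constructor
      · intro hp
        simp only [outs, List.mem_flatMap, List.mem_map] at hp
        obtain ⟨q', _, p', hp', hpe⟩ := hp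
        obtain ⟨rfl, rfl⟩ := Prod.mk.injEq .. ▸ hpe
        exact Lift.nt B ((ih q' p').mp hp')
      · intro hp
        cases hp with
        | @nt _ q' _ _ s0' B hs =>
          simp only [outs, List.mem_flatMap, List.mem_map]
          exact ⟨q', mem_allQ _, (s0', f), (ih q' (s0', f)).mpr hs, rfl⟩

/-- The start rule of the projected grammar. -/
def startRule : ContextFreeRule (T ⊕ VarOp ↥X') (NTp G) :=
  ⟨none, [Symbol.nonterminal (some (G.initial, fun _ => 0, fun _ => 2))]⟩

noncomputable def ruleList : List (ContextFreeRule (T ⊕ VarOp ↥X') (NTp G)) :=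
  startRule X' G ::
    G.rules.toList.flatMap fun rl => allQ.flatMap fun q =>
      (outs X' G rl.output q).map fun p => ⟨some (rl.input, q, p.2), p.1⟩

noncomputable def Gp : ContextFreeGrammar.{0} (T ⊕ VarOp ↥X') :=
  ⟨NTp G, none,
    @List.toFinset _ (Classical.decEq (ContextFreeRule (T ⊕ VarOp ↥X') (NTp G)))
      (ruleList X' G)⟩

lemma mem_Gp_rules {rl' : ContextFreeRule (T ⊕ VarOp ↥X') (NTp G)} :
    rl' ∈ (Gp X' G).rules ↔
      rl' = startRule X' G ∨
        ∃ rl ∈ G.rules, ∃ q f o, Lift X' G q rl.output f o ∧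
          rl' = ⟨some (rl.input, q, f), o⟩ := by
  have hR : (Gp X' G).rules =
      @List.toFinset _ (Classical.decEq (ContextFreeRule (T ⊕ VarOp ↥X') (NTp G)))
        (ruleList X' G) := rfl
  have hmem : rl' ∈ (Gp X' G).rules ↔ rl' ∈ ruleList X' G := by
    rw [hR]; exact @List.mem_toFinset _ (Classical.decEq _) _ _
  rw [hmem, ruleList, List.mem_cons]
  apply or_congr Iff.rfl
  simp only [List.mem_flatMap, List.mem_map, Finset.mem_toList]
  constructor
  · rintro ⟨rl, hrl, q, -, p, hp, rfl⟩
    exact ⟨rl, hrl, q, p.2, p.1, (outs_spec X' G _ _ _).mp hp, rfl⟩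
  · rintro ⟨rl, hrl, q, f, o, ho, rfl⟩
    exact ⟨rl, hrl, q, mem_allQ _, (o, f), (outs_spec X' G _ _ _).mpr ho, rfl⟩

lemma lift_append {q m f : Q X} {s₁ s₂ s₁' s₂'}
    (h₁ : Lift X' G q s₁ m s₁') (h₂ : Lift X' G m s₂ f s₂') :
    Lift X' G q (s₁ ++ s₂) f (s₁' ++ s₂') := by
  induction h₁ generalizing s₂ s₂' with
  | nil => exact h₂
  | term a hq _ ih =>
    rw [List.cons_append, List.append_assoc]
    exact Lift.term a hq (ih h₂)
  | nt B _ ih =>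
    rw [List.cons_append, List.cons_append]
    exact Lift.nt B (ih h₂)

lemma lift_split {s₁ s₂} {q f : Q X} {s'}
    (h : Lift X' G q (s₁ ++ s₂) f s') :
    ∃ m s₁' s₂', s' = s₁' ++ s₂' ∧ Lift X' G q s₁ m s₁' ∧ Lift X' G m s₂ f s₂' := by
  induction s₁ generalizing q s' with
  | nil => exact ⟨q, [], s', rfl, Lift.nil q, h⟩
  | cons a s₁ ih =>
    rw [List.cons_append] at h
    cases h with
    | term a hq hs =>
      obtain ⟨m, s₁', s₂', rfl, hl₁, hl₂⟩ := ih hs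
      exact ⟨m, _ ++ s₁', s₂', (List.append_assoc _ _ _).symm, Lift.term a hq hl₁, hl₂⟩
    | nt B hs =>
      obtain ⟨m, s₁', s₂', rfl, hl₁, hl₂⟩ := ih hs
      exact ⟨m, _ :: s₁', s₂', rfl, Lift.nt B hl₁, hl₂⟩

lemma lift_split_nt {q f : Q X} {s s'} (h : Lift X' G q s f s') :
    ∀ p' M r', s' = p' ++ Symbol.nonterminal M :: r' →
      ∃ s₁ B s₂ q₁ q₂, s = s₁ ++ Symbol.nonterminal B :: s₂ ∧ M = some (B, q₁, q₂) ∧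
        Lift X' G q s₁ q₁ p' ∧ Lift X' G q₂ s₂ f r' := by
  induction h with
  | nil q =>
    intro p' M r' hp
    exact absurd hp.symm (by simp)
  | term a hq hs ih =>
    intro p' M r' hp
    rcases List.append_eq_append_iff.mp hp with ⟨a', rfl, ha'⟩ | ⟨c', hc', hr⟩
    · obtain ⟨s₁, B, s₂, q₁, q₂, rfl, rfl, hl₁, hl₂⟩ := ih a' M r' ha'
      exact ⟨_ :: s₁, B, s₂, q₁, q₂, rfl, rfl, Lift.term a hq hl₁, hl₂⟩
    · rcases c' with _ | ⟨c, c's⟩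
      · obtain ⟨s₁, B, s₂, q₁, q₂, rfl, rfl, hl₁, hl₂⟩ := ih [] M r' (by simpa using hr.symm)
        rw [List.append_nil] at hc'
        refine ⟨_ :: s₁, B, s₂, q₁, q₂, rfl, rfl, ?_, hl₂⟩
        have := Lift.term (X' := X') (G := G) a hq hl₁
        rwa [List.append_nil, hc'] at this
      · exfalso
        have hmem : c ∈ (phi1 X' a).map Symbol.terminal := by
          rw [hc']; exact List.mem_append_right _ (by simp)
        have hcn : c = Symbol.nonterminal M := (List.cons.inj hr).1.symm
        rw [hcn] at hmem
        simp only [List.mem_map] at hmem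
        obtain ⟨t, -, ht⟩ := hmem
        cases ht
  | nt B hs ih =>
    intro p' M r' hp
    rcases p' with _ | ⟨c, p''⟩
    · have h1 := (List.cons.inj hp).1
      have h2 := (List.cons.inj hp).2
      exact ⟨[], B, _, _, _, rfl, (Symbol.nonterminal.inj h1).symm, Lift.nil _, h2 ▸ hs⟩
    · obtain ⟨hc, hrest⟩ := List.cons.inj hp
      obtain ⟨s₁, B₂, s₂, q₁, q₂, rfl, rfl, hl₁, hl₂⟩ := ih p'' M r' hrest
      exact ⟨_ :: s₁, B₂, s₂, q₁, q₂, rfl, rfl, hc ▸ Lift.nt B hl₁, hl₂⟩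

end Gram

end Stmt5

namespace Stmt5

section Gram2

variable {T X : Type} (X' : Set X) [DecidablePred (· ∈ X')] [DecidableEq X] [Fintype X]
variable (G : ContextFreeGrammar.{0} (T ⊕ VarOp X))

lemma map_terminal_inj {N : Type} {w₁ w₂ : List (T ⊕ VarOp ↥X')}
    (h : w₁.map (Symbol.terminal (N := N)) = w₂.map Symbol.terminal) : w₁ = w₂ := by
  have : Function.Injective (Symbol.terminal (T := T ⊕ VarOp ↥X') (N := N)) := by
    intro a b hab; cases hab; rfl
  exact List.map_injective_iff.mpr this h

lemma lift_terminals {q f : Q X} {s s'} (h : Lift X' G q s f s') :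
    ∀ w', s' = w'.map Symbol.terminal →
      ∃ w, s = w.map Symbol.terminal ∧ run q w = some f ∧ phi X' w = w' := by
  induction h with
  | nil q =>
    intro w' hw'
    obtain rfl : w' = [] := by simpa using hw'.symm
    exact ⟨[], rfl, rfl, rfl⟩
  | term a hq hs ih =>
    intro w' hw'
    obtain ⟨w₁', w₂', rfl, hm₁, hm₂⟩ := List.map_eq_append_iff.mp hw'.symm
    obtain ⟨w₂, rfl, hrun, rfl⟩ := ih w₂' hm₂.symm
    refine ⟨a :: w₂, rfl, ?_, ?_⟩
    · show run _ (a :: w₂) = _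
      simp only [run, hq]
      exact hrun
    · show phi1 X' a ++ phi X' w₂ = w₁' ++ phi X' w₂
      rw [map_terminal_inj X' hm₁]
  | nt B hs ih =>
    intro w' hw'
    exfalso
    rcases w' with _ | ⟨c, w'⟩
    · simp at hw'
    · cases (List.cons.inj hw').1
  
lemma lift_of_terminals {w : RefWord T X} :
    ∀ {q f : Q X}, run q w = some f →
      Lift X' G q (w.map Symbol.terminal) f ((phi X' w).map Symbol.terminal) := by
  induction w with
  | nil =>
    intro q f h
    obtain rfl : q = f := by simpa [run] using h
    exact Lift.nil q
  | cons a w ih =>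
    intro q f h
    simp only [run] at h
    cases hq : dstep (T := T) q a with
    | none => rw [hq] at h; cases h
    | some q' =>
      rw [hq] at h
      show Lift X' G q (Symbol.terminal a :: w.map Symbol.terminal) f
        ((phi1 X' a ++ phi X' w).map Symbol.terminal)
      rw [List.map_append]
      exact Lift.term a hq (ih h)

lemma produces_lift {s t} (h : G.Produces s t) {q f : Q X} {t'}
    (hl : Lift X' G q t f t') :
    ∃ s', Lift X' G q s f s' ∧ (Gp X' G).Produces s' t' := by
  obtain ⟨rl, hrl, hrw⟩ := h
  obtain ⟨p, r, hs, ht⟩ := hrw.exists_parts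
  rw [ht, List.append_assoc] at hl
  obtain ⟨m₁, p', rest, rfl, hp, hrest⟩ := lift_split X' G hl
  obtain ⟨m₂, o', r', rfl, ho, hr⟩ := lift_split X' G hrest
  refine ⟨p' ++ Symbol.nonterminal (some (rl.input, m₁, m₂)) :: r', ?_, ?_⟩
  · rw [hs, List.append_assoc, List.singleton_append]
    exact lift_append X' G hp (Lift.nt rl.input hr)
  · refine ⟨⟨some (rl.input, m₁, m₂), o'⟩, ?_, ?_⟩
    · exact (mem_Gp_rules X' G).mpr (Or.inr ⟨rl, hrl, m₁, m₂, o', ho, rfl⟩)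
    · have := ContextFreeRule.rewrites_of_exists_parts
        (⟨some (rl.input, m₁, m₂), o'⟩ : ContextFreeRule (T ⊕ VarOp ↥X') (NTp G)) p' r'
      have h2 := by simpa only [List.append_assoc, List.singleton_append] using this
      exact h2

lemma derives_lift {s w} (h : G.Derives s w) :
    ∀ {q f : Q X} {w'}, Lift X' G q w f w' →
      ∃ s', Lift X' G q s f s' ∧ (Gp X' G).Derives s' w' := by
  induction h using Relation.ReflTransGen.head_induction_on with
  | refl =>
    intro q f w' hl
    exact ⟨w', hl, Relation.ReflTransGen.refl⟩
  | head hstep _ ih =>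
    intro q f w' hl
    obtain ⟨c', hc', hder⟩ := ih hl
    obtain ⟨s', hs', hprod⟩ := produces_lift X' G hstep hc'
    exact ⟨s', hs', hprod.trans_derives hder⟩

lemma produces_lower {s' t'} (h : (Gp X' G).Produces s' t') {q f : Q X} {s}
    (hl : Lift X' G q s f s') :
    ∃ t, Lift X' G q t f t' ∧ G.Produces s t := by
  obtain ⟨rl', hrl', hrw⟩ := h
  obtain ⟨p', r', hs', ht'⟩ := hrw.exists_parts
  rw [hs', List.append_assoc, List.singleton_append] at hl
  obtain ⟨s₁, B, s₂, q₁, q₂, rfl, hM, hl₁, hl₂⟩ := lift_split_nt X' G hl _ _ _ rfl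
  rcases (mem_Gp_rules X' G).mp hrl' with hstart | ⟨rl, hrl, qa, fa, o, ho, rfl⟩
  · exfalso
    rw [hstart] at hM
    simp [startRule] at hM
  · obtain ⟨h1, h2, h3⟩ : rl.input = B ∧ qa = q₁ ∧ fa = q₂ := by
      have := Option.some.inj hM
      exact ⟨congrArg Prod.fst this, congrArg (fun z => z.2.1) this,
        congrArg (fun z => z.2.2) this⟩
    subst h2; subst h3
    refine ⟨s₁ ++ rl.output ++ s₂, ?_, ?_⟩
    · rw [ht', List.append_assoc, List.append_assoc]
      exact lift_append X' G hl₁ (lift_append X' G ho hl₂)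
    · refine ⟨rl, hrl, ?_⟩
      have := ContextFreeRule.rewrites_of_exists_parts rl s₁ s₂
      rw [h1] at this
      simpa only [List.append_assoc, List.singleton_append] using this

lemma derives_lower {s' w'} (h : (Gp X' G).Derives s' w') :
    ∀ {q f : Q X} {s}, Lift X' G q s f s' →
      ∃ w, Lift X' G q w f w' ∧ G.Derives s w := by
  induction h using Relation.ReflTransGen.head_induction_on with
  | refl =>
    intro q f s hl
    exact ⟨s, hl, Relation.ReflTransGen.refl⟩
  | head hstep _ ih =>
    intro q f s hl
    obtain ⟨t, ht, hprod⟩ := produces_lower X' G hstep hl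
    obtain ⟨w, hw, hder⟩ := ih ht
    exact ⟨w, hw, hprod.trans_derives hder⟩

/-- Completeness: images of valid words of `G` are in the projected grammar's language. -/
lemma phi_mem_language {r : RefWord T X} (hr : r ∈ G.language)
    (hrun : run (fun _ => 0) r = some (fun _ => 2)) :
    phi X' r ∈ (Gp X' G).language := by
  have hd := (G.mem_language_iff r).mp hr
  obtain ⟨s', hs', hder⟩ := derives_lift X' G hd (lift_of_terminals X' G hrun)
  rw [(Gp X' G).mem_language_iff]
  cases hs' with
  | @nt _ q' _ _ s0' B hs0 =>
    cases hs0
    refine ContextFreeGrammar.Produces.trans_derives ?_ hder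
    refine ⟨startRule X' G, (mem_Gp_rules X' G).mpr (Or.inl rfl), ?_⟩
    exact ContextFreeRule.Rewrites.input_output

/-- Soundness: every word of the projected grammar's language comes from a valid word of `G`. -/
lemma mem_language_phi {w' : RefWord T ↥X'} (hw : w' ∈ (Gp X' G).language) :
    ∃ r, r ∈ G.language ∧ run (fun _ => 0) r = some (fun _ => 2) ∧ phi X' r = w' := by
  have hd := ((Gp X' G).mem_language_iff w').mp hw
  rcases hd.eq_or_head with heq | ⟨u, hprod, hder⟩
  · exfalso
    rcases w' with _ | ⟨c, w'⟩
    · simp at heq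
    · cases (List.cons.inj heq).1
  · obtain ⟨rl', hrl', hrw⟩ := hprod
    obtain ⟨p, r, hs, ht⟩ := hrw.exists_parts
    obtain ⟨rfl, rfl⟩ : p = [] ∧ r = [] := by
      have hlen := congrArg List.length hs
      simp only [List.length_cons, List.length_nil, List.length_append,
        List.length_singleton] at hlen
      exact ⟨List.eq_nil_of_length_eq_zero (by omega),
        List.eq_nil_of_length_eq_zero (by omega)⟩
    have hinput : rl'.input = none := by
      simp at hs
      exact hs.symm
    have hstart : rl' = startRule X' G := by
      rcases (mem_Gp_rules X' G).mp hrl' with h | ⟨rl, _, qa, fa, o, _, rfl⟩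
      · exact h
      · exact absurd hinput (by simp)
    rw [ht, hstart] at hder
    simp only [startRule, List.nil_append, List.append_nil] at hder
    have hlift : Lift X' G (fun _ => 0) [Symbol.nonterminal G.initial] (fun _ => 2)
        [Symbol.nonterminal (some (G.initial, fun _ => 0, fun _ => 2))] :=
      Lift.nt G.initial (Lift.nil _)
    obtain ⟨w, hw', hder'⟩ := derives_lower X' G hder hlift
    obtain ⟨r, rfl, hrun, hphi⟩ := lift_terminals X' G hw' w' rfl
    exact ⟨r, (G.mem_language_iff r).mpr hder', hrun, hphi⟩

end Gram2

end Stmt5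

namespace Stmt5

lemma split_unique {α : Type} {a : α} :
    ∀ {u₁ u₂ v₁ v₂ : List α}, u₁ ++ a :: v₁ = u₂ ++ a :: v₂ → a ∉ u₂ → a ∉ v₂ →
      u₁ = u₂ ∧ v₁ = v₂ := by
  intro u₁ u₂
  induction u₂ generalizing u₁ with
  | nil =>
    intro v₁ v₂ h h2 h3
    rcases u₁ with _ | ⟨b, u₁⟩
    · simpa using h
    · obtain ⟨rfl, htl⟩ := List.cons.inj h
      exact absurd (htl ▸ List.mem_append_right u₁ (List.mem_cons_self)) h3
  | cons c u₂ ih =>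
    intro v₁ v₂ h h2 h3
    rcases u₁ with _ | ⟨b, u₁⟩
    · obtain ⟨rfl, _⟩ := List.cons.inj h
      exact absurd (List.mem_cons_self : a ∈ a :: u₂) h2
    · obtain ⟨rfl, htl⟩ := List.cons.inj h
      obtain ⟨rfl, h5⟩ := ih htl (fun hc => h2 (List.mem_cons_of_mem _ hc)) h3
      exact ⟨rfl, h5⟩

lemma empty_not_mem_language {α : Type} (w : List α) :
    w ∉ (⟨PUnit, PUnit.unit, ∅⟩ : ContextFreeGrammar.{0} α).language := by
  intro hw
  have hd := (ContextFreeGrammar.mem_language_iff _ w).mp hw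
  rcases hd.eq_or_head with heq | ⟨u, hprod, _⟩
  · rcases w with _ | ⟨c, w⟩
    · simp at heq
    · cases (List.cons.inj heq).1
  · obtain ⟨rl, hrl, _⟩ := hprod
    exact absurd hrl (Finset.notMem_empty rl)

end Stmt5


open Stmt5

/-- The class of context-free spanners is closed under projection: restricting every mapping of a
context-free spanner to a subset `X'` of its variables yields a context-free spanner. -/
theorem stmt5 (T X : Type) (X' : Set X) (S : List T → Set (X → ℕ × ℕ))
    (h : IsCFSpanner S) :
    IsCFSpanner (fun d => {ν : ↥X' → ℕ × ℕ | ∃ μ ∈ S d, ν = fun x => μ x.1}) := by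
  classical
  obtain ⟨G, hG⟩ := h
  by_cases hne : ∃ d, ∃ μ, μ ∈ S d
  · -- main case: some valid ref-word exists, hence `X` is finite
    obtain ⟨d₀, μ₀, hμ₀⟩ := hne
    rw [hG] at hμ₀
    obtain ⟨r₀, _, hr₀V, -, -⟩ := hμ₀
    have hmem : ∀ x : X, Sum.inr (x, true) ∈ r₀ := by
      intro x
      obtain ⟨u, v, w, rfl, -⟩ := hr₀V x
      exact List.mem_append_right u (List.mem_cons_self)
    haveI : Finite {a // a ∈ r₀} := by
      have := r₀.finite_toSet
      exact this.to_subtype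
    haveI : Finite X := by
      refine Finite.of_injective (fun x => (⟨Sum.inr (x, true), hmem x⟩ : {a // a ∈ r₀})) ?_
      intro x y hxy
      have h1 : (Sum.inr (x, true) : T ⊕ VarOp X) = Sum.inr (y, true) :=
        congrArg Subtype.val hxy
      exact (Prod.mk.inj (Sum.inr.inj h1)).1
    haveI : Fintype X := Fintype.ofFinite X
    refine ⟨Gp X' G, fun d => ?_⟩
    ext ν
    simp only [Set.mem_setOf_eq]
    constructor
    · rintro ⟨μ, hμ, rfl⟩
      rw [hG] at hμ
      obtain ⟨r, hrL, hrV, hclr, hmap⟩ := hμ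
      have hrun : run (fun _ => 0) r = some (fun _ => 2) := by
        rw [run_eq_some_iff]
        intro x
        rw [validRef_iff_projSeq.mp hrV x]
        rfl
      refine ⟨phi X' r, phi_mem_language X' G hrL hrun, ?_, ?_, ?_⟩
      · rintro ⟨x, hx⟩
        obtain ⟨u, v, w, rfl, hfree⟩ := hrV x
        refine ⟨phi X' u, phi X' v, phi X' w, phi_split X' hx u v w, ?_⟩
        · intro b
          exact ⟨not_marker_mem_phi X' ((hfree b).1), not_marker_mem_phi X' ((hfree b).2.1),
            not_marker_mem_phi X' ((hfree b).2.2)⟩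
      · rw [clr_phi, hclr]
      · rintro ⟨x, hx⟩
        obtain ⟨u, v, w, rfl, hval⟩ := hmap x
        refine ⟨phi X' u, phi X' v, phi X' w, phi_split X' hx u v w, ?_⟩
        rw [clr_phi, clr_phi]
        exact hval
    · rintro ⟨r', hr'L, hr'V, hclr', hmap'⟩
      obtain ⟨r, hrL, hrun, rfl⟩ := mem_language_phi X' G hr'L
      have hrV : ValidRef r := by
        rw [validRef_iff_projSeq]
        intro x
        have := (run_eq_some_iff r _ _).mp hrun x
        exact runC_zero_two.mp this
      choose u v w hsplit hfree using hrV
      refine ⟨fun x => ((clr (u x)).length + 1, (clr (u x)).length + 1 + (clr (v x)).length),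
        ?_, ?_⟩
      · rw [hG]
        refine ⟨r, hrL, fun x => ⟨u x, v x, w x, hsplit x, hfree x⟩, ?_,
          fun x => ⟨u x, v x, w x, hsplit x, rfl⟩⟩
        rw [← hclr', clr_phi]
      · funext x'
        rcases x' with ⟨x, hx⟩
        obtain ⟨u₁, v₁, w₁, hsp1, hval1⟩ := hmap' ⟨x, hx⟩
        have hsp2 : phi X' r = phi X' (u x) ++ Sum.inr ((⟨x, hx⟩ : ↥X'), true) ::
            (phi X' (v x) ++ Sum.inr ((⟨x, hx⟩ : ↥X'), false) :: phi X' (w x)) := by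
          rw [hsplit x]
          exact phi_split X' hx (u x) (v x) (w x)
        have heq := hsp1.symm.trans hsp2
        have hnotu : Sum.inr ((⟨x, hx⟩ : ↥X'), true) ∉ phi X' (u x) :=
          not_marker_mem_phi X' ((hfree x true).1)
        have hnotv : Sum.inr ((⟨x, hx⟩ : ↥X'), true) ∉
            phi X' (v x) ++ Sum.inr ((⟨x, hx⟩ : ↥X'), false) :: phi X' (w x) := by
          intro hc
          rcases List.mem_append.mp hc with hc | hc
          · exact not_marker_mem_phi X' ((hfree x true).2.1) hc
          · rcases List.mem_cons.mp hc with hc | hc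
            · exact Bool.noConfusion (Prod.mk.inj (Sum.inr.inj hc)).2
            · exact not_marker_mem_phi X' ((hfree x true).2.2) hc
        obtain ⟨hu1, htail⟩ := split_unique heq hnotu hnotv
        obtain ⟨hv1, -⟩ := split_unique htail
          (not_marker_mem_phi X' ((hfree x false).2.1))
          (not_marker_mem_phi X' ((hfree x false).2.2))
        rw [hval1, hu1, hv1, clr_phi, clr_phi]
  · -- degenerate case: the spanner is empty
    push_neg at hne
    refine ⟨⟨PUnit, PUnit.unit, ∅⟩, fun d => ?_⟩
    ext ν
    simp only [Set.mem_setOf_eq]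
    constructor
    · rintro ⟨μ, hμ, -⟩
      exact absurd hμ (hne d μ)
    · rintro ⟨r, hrL, -⟩
      exact absurd hrL (empty_not_mem_language r)
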